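/- Let ħ > 0 and let A, B be real symmetric positive definite n×n matrices. Set X = {x ∈ ℝⁿ : Ax·x ≤ ħ} and P = {p ∈ ℝⁿ : Bp·p ≤ ħ}, and assume X^ħ ⊆ P. Then the block-diagonal matrix K = [[B^{1/2}A^{1/2}, 0],[0, B^{−1/2}A^{−1/2}]] is symplectic, and it satisfies B^{1/2}A^{1/2}(X) = P^ħ ⊆ X and B^{−1/2}A^{−1/2}(X^ħ) = P; in particular K(X × X^ħ) ⊆ X × P, so the image under K of the quantum blob {(x,p) : Ax·x + A⁻¹p·p ≤ ħ} is a quantum blob contained in X × P. -/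

import Mathlib

open Matrix

noncomputable section

/-- The `ℏ`-polar dual of a set `X ⊆ ℝⁿ`. -/
def polarDual (ℏ : ℝ) {n : ℕ} (X : Set (Fin n → ℝ)) : Set (Fin n → ℝ) :=
  {p | ∀ x ∈ X, p ⬝ᵥ x ≤ ℏ}

/-- The standard symplectic matrix `J = [[0, I],[-I, 0]]` on `ℝⁿ × ℝⁿ`. -/
def stdJ (n : ℕ) : Matrix (Fin n ⊕ Fin n) (Fin n ⊕ Fin n) ℝ :=
  Matrix.fromBlocks 0 1 (-1) 0

/-- `S ∈ Sp(2n, ℝ)` iff `Sᵀ J S = J`. -/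
def IsSymplectic {n : ℕ} (S : Matrix (Fin n ⊕ Fin n) (Fin n ⊕ Fin n) ℝ) : Prop :=
  Sᵀ * stdJ n * S = stdJ n

/-- The closed ball of radius `r` centered at `0` in phase space `ℝⁿ × ℝⁿ`. -/
def ballPhase (n : ℕ) (r : ℝ) : Set ((Fin n ⊕ Fin n) → ℝ) :=
  {z | ∑ i, z i ^ 2 ≤ r ^ 2}

section Helpers
variable {n : ℕ}

lemma dotCS (u v : Fin n → ℝ) : (u ⬝ᵥ v)^2 ≤ (u ⬝ᵥ u) * (v ⬝ᵥ v) := by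
  simpa [dotProduct, sq] using Finset.sum_mul_sq_le_sq_mul_sq Finset.univ u v

lemma dot_self_nonneg' (u : Fin n → ℝ) : 0 ≤ u ⬝ᵥ u :=
  Finset.sum_nonneg fun _ _ => mul_self_nonneg _

lemma dot_shift (M N : Matrix (Fin n) (Fin n) ℝ) (u v : Fin n → ℝ) :
    M.mulVec u ⬝ᵥ N.mulVec v = ((Nᵀ * M).mulVec u) ⬝ᵥ v := by
  rw [Matrix.dotProduct_mulVec, ← Matrix.mulVec_transpose, Matrix.mulVec_mulVec]

lemma symm_of_posDef {Asq : Matrix (Fin n) (Fin n) ℝ} (hAsq : Asq.PosDef) : Asqᵀ = Asq := by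
  have := hAsq.isHermitian
  rwa [Matrix.IsHermitian, conjTranspose_eq_transpose_of_trivial] at this

lemma inv_cancel_of_posDef {Asq : Matrix (Fin n) (Fin n) ℝ} (hAsq : Asq.PosDef) :
    Asq * Asq⁻¹ = 1 :=
  Matrix.mul_nonsing_inv _ (isUnit_iff_ne_zero.mpr hAsq.det_pos.ne')

lemma inv_cancel_of_posDef' {Asq : Matrix (Fin n) (Fin n) ℝ} (hAsq : Asq.PosDef) :
    Asq⁻¹ * Asq = 1 :=
  Matrix.nonsing_inv_mul _ (isUnit_iff_ne_zero.mpr hAsq.det_pos.ne')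

lemma symm_inv_of_posDef {Asq : Matrix (Fin n) (Fin n) ℝ} (hAsq : Asq.PosDef) :
    (Asq⁻¹)ᵀ = Asq⁻¹ := by
  rw [Matrix.transpose_nonsing_inv, symm_of_posDef hAsq]

variable {A Asq : Matrix (Fin n) (Fin n) ℝ}

lemma quad_sq (hAsq : Asq.PosDef) (hA2 : Asq * Asq = A) (x : Fin n → ℝ) :
    A.mulVec x ⬝ᵥ x = Asq.mulVec x ⬝ᵥ Asq.mulVec x := by
  rw [dot_shift, symm_of_posDef hAsq, hA2]

lemma inv_split (hA2 : Asq * Asq = A) : A⁻¹ = Asq⁻¹ * Asq⁻¹ := by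
  rw [← hA2, Matrix.mul_inv_rev]

lemma quad_inv_sq (hAsq : Asq.PosDef) (hA2 : Asq * Asq = A) (p : Fin n → ℝ) :
    A⁻¹.mulVec p ⬝ᵥ p = Asq⁻¹.mulVec p ⬝ᵥ Asq⁻¹.mulVec p := by
  rw [dot_shift, symm_inv_of_posDef hAsq, inv_split hA2]

lemma quad_nonneg (hAsq : Asq.PosDef) (hA2 : Asq * Asq = A) (x : Fin n → ℝ) :
    0 ≤ A.mulVec x ⬝ᵥ x := by
  rw [quad_sq hAsq hA2]; exact dot_self_nonneg' _

lemma quad_inv_nonneg (hAsq : Asq.PosDef) (hA2 : Asq * Asq = A) (p : Fin n → ℝ) :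
    0 ≤ A⁻¹.mulVec p ⬝ᵥ p := by
  rw [quad_inv_sq hAsq hA2]; exact dot_self_nonneg' _

lemma quad_inv_zero (hAsq : Asq.PosDef) (hA2 : Asq * Asq = A) (p : Fin n → ℝ)
    (h : A⁻¹.mulVec p ⬝ᵥ p = 0) : p = 0 := by
  rw [quad_inv_sq hAsq hA2, dotProduct_self_eq_zero] at h
  have h2 : Asq.mulVec (Asq⁻¹.mulVec p) = Asq.mulVec 0 := by rw [h]
  rwa [Matrix.mulVec_mulVec, inv_cancel_of_posDef hAsq, Matrix.one_mulVec,
    Matrix.mulVec_zero] at h2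

lemma polar_ellipsoid {ℏ : ℝ} (hℏ : 0 < ℏ)
    (hAsq : Asq.PosDef) (hA2 : Asq * Asq = A) :
    polarDual ℏ {x : Fin n → ℝ | A.mulVec x ⬝ᵥ x ≤ ℏ}
      = {p : Fin n → ℝ | A⁻¹.mulVec p ⬝ᵥ p ≤ ℏ} := by
  ext p
  constructor
  · intro hp
    set q := A⁻¹.mulVec p ⬝ᵥ p with hq
    show q ≤ ℏ
    rcases eq_or_lt_of_le (quad_inv_nonneg hAsq hA2 p) with h0 | hqpos
    · linarith
    · set t := Real.sqrt ℏ / Real.sqrt q with ht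
      have hsq : 0 < Real.sqrt q := Real.sqrt_pos.mpr hqpos
      have hsh : 0 < Real.sqrt ℏ := Real.sqrt_pos.mpr hℏ
      have ht2 : t^2 = ℏ / q := by
        rw [ht, div_pow, Real.sq_sqrt hℏ.le, Real.sq_sqrt (le_of_lt hqpos)]
      have hAAp : A.mulVec (A⁻¹.mulVec p) = p := by
        rw [Matrix.mulVec_mulVec, ← hA2, Matrix.mul_nonsing_inv, Matrix.one_mulVec]
        rw [Matrix.det_mul]
        exact isUnit_iff_ne_zero.mpr (mul_pos hAsq.det_pos hAsq.det_pos).ne'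
      have hx : A.mulVec (t • A⁻¹.mulVec p) ⬝ᵥ (t • A⁻¹.mulVec p) = ℏ := by
        rw [Matrix.mulVec_smul, smul_dotProduct, dotProduct_smul, hAAp, smul_eq_mul,
          smul_eq_mul, dotProduct_comm, ← hq, ← mul_assoc, ← sq, ht2]
        field_simp
        exact div_self hqpos.ne'
      have hpx := hp _ (le_of_eq hx)
      have hpx2 : p ⬝ᵥ (t • A⁻¹.mulVec p) = t * q := by
        rw [dotProduct_smul, smul_eq_mul, dotProduct_comm, ← hq]
      rw [hpx2, ht, div_mul_eq_mul_div] at hpx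
      have h3 : Real.sqrt ℏ * Real.sqrt q ≤ ℏ := by
        calc Real.sqrt ℏ * Real.sqrt q = Real.sqrt ℏ * q / Real.sqrt q := by
              field_simp; exact Real.sq_sqrt hqpos.le
          _ ≤ ℏ := hpx
      nlinarith [Real.sq_sqrt hℏ.le, Real.sq_sqrt hqpos.le, hsh, hsq]
  · intro hp x hx
    have h1 : (Asq⁻¹.mulVec p) ⬝ᵥ (Asq.mulVec x) = p ⬝ᵥ x := by
      rw [dot_shift, symm_of_posDef hAsq, inv_cancel_of_posDef hAsq, Matrix.one_mulVec]
    have h2 : Asq⁻¹.mulVec p ⬝ᵥ Asq⁻¹.mulVec p ≤ ℏ := by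
      rw [← quad_inv_sq hAsq hA2]; exact hp
    have h3 : Asq.mulVec x ⬝ᵥ Asq.mulVec x ≤ ℏ := by
      rw [← quad_sq hAsq hA2]; exact hx
    have h4 := dotCS (Asq⁻¹.mulVec p) (Asq.mulVec x)
    rw [h1] at h4
    nlinarith [dot_self_nonneg' (Asq⁻¹.mulVec p), dot_self_nonneg' (Asq.mulVec x)]

lemma scale_le {ℏ : ℝ} (hℏ : 0 < ℏ) {M N : Matrix (Fin n) (Fin n) ℝ}
    (hM0 : ∀ p, 0 ≤ M.mulVec p ⬝ᵥ p) (hMz : ∀ p, M.mulVec p ⬝ᵥ p = 0 → p = 0)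
    (h : ∀ p, M.mulVec p ⬝ᵥ p ≤ ℏ → N.mulVec p ⬝ᵥ p ≤ ℏ) :
    ∀ p, N.mulVec p ⬝ᵥ p ≤ M.mulVec p ⬝ᵥ p := by
  intro p
  rcases eq_or_lt_of_le (hM0 p) with h0 | hq
  · have hp0 := hMz p h0.symm
    simp [hp0]
  · set q := M.mulVec p ⬝ᵥ p with hqdef
    set t := Real.sqrt (ℏ / q) with ht
    have htq : 0 < ℏ / q := div_pos hℏ hq
    have ht2 : t^2 = ℏ / q := Real.sq_sqrt htq.le
    have hscale : ∀ (C : Matrix (Fin n) (Fin n) ℝ) (v : Fin n → ℝ),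
        C.mulVec (t • v) ⬝ᵥ (t • v) = t^2 * (C.mulVec v ⬝ᵥ v) := by
      intro C v
      rw [Matrix.mulVec_smul, smul_dotProduct, dotProduct_smul, smul_eq_mul, smul_eq_mul,
        ← mul_assoc, ← sq]
    have hMq : M.mulVec (t • p) ⬝ᵥ (t • p) ≤ ℏ := by
      rw [hscale, ht2, ← hqdef]
      field_simp
      exact le_refl 1
    have h5 := h _ hMq
    rw [hscale, ht2] at h5
    rw [div_mul_eq_mul_div, div_le_iff₀ hq, mul_comm ℏ q] at h5
    exact le_of_mul_le_mul_left (by linarith [h5]) hℏ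

lemma flip_le {C : Matrix (Fin n) (Fin n) ℝ}
    (h : ∀ u, C.mulVec u ⬝ᵥ C.mulVec u ≤ u ⬝ᵥ u) :
    ∀ v, Cᵀ.mulVec v ⬝ᵥ Cᵀ.mulVec v ≤ v ⬝ᵥ v := by
  intro v
  set w := Cᵀ.mulVec v with hw
  set a := w ⬝ᵥ w with ha
  have ha0 : 0 ≤ a := dot_self_nonneg' w
  have hb0 : 0 ≤ v ⬝ᵥ v := dot_self_nonneg' v
  rcases eq_or_lt_of_le ha0 with h0 | hap
  · rw [← h0]; exact hb0
  · have key : v ⬝ᵥ C.mulVec w = a := by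
      rw [Matrix.dotProduct_mulVec, ← Matrix.mulVec_transpose]
    have h1 := dotCS v (C.mulVec w)
    rw [key] at h1
    have h2 := h w
    have h3 : a^2 ≤ (v ⬝ᵥ v) * a :=
      h1.trans (mul_le_mul_of_nonneg_left h2 hb0)
    nlinarith

lemma blockSymp {L M : Matrix (Fin n) (Fin n) ℝ} (h1 : Lᵀ * M = 1) :
    IsSymplectic (Matrix.fromBlocks L 0 0 M) := by
  have h2 : Mᵀ * L = 1 := by
    have h3 := congrArg Matrix.transpose h1
    rwa [Matrix.transpose_mul, Matrix.transpose_transpose, Matrix.transpose_one] at h3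
  unfold IsSymplectic stdJ
  rw [Matrix.fromBlocks_transpose, Matrix.fromBlocks_multiply, Matrix.fromBlocks_multiply]
  simp [h1, h2]

lemma mulVec_block_inl (P Q : Matrix (Fin n) (Fin n) ℝ) (w : (Fin n ⊕ Fin n) → ℝ) :
    ((Matrix.fromBlocks P 0 0 Q).mulVec w) ∘ Sum.inl = P.mulVec (w ∘ Sum.inl) := by
  rw [Matrix.fromBlocks_mulVec]
  simp [Sum.elim_comp_inl]

lemma mulVec_block_inr (P Q : Matrix (Fin n) (Fin n) ℝ) (w : (Fin n ⊕ Fin n) → ℝ) :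
    ((Matrix.fromBlocks P 0 0 Q).mulVec w) ∘ Sum.inr = Q.mulVec (w ∘ Sum.inr) := by
  rw [Matrix.fromBlocks_mulVec]
  simp [Sum.elim_comp_inr]

lemma image_quad {ℏ : ℝ} (M N : Matrix (Fin n) (Fin n) ℝ) (hMN : M * N = 1)
    (g f : (Fin n → ℝ) → ℝ) (hfg : ∀ x, f (M.mulVec x) = g x) :
    M.mulVec '' {x | g x ≤ ℏ} = {y | f y ≤ ℏ} := by
  ext y
  constructor
  · rintro ⟨x, hx, rfl⟩
    simpa [hfg] using hx
  · intro hy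
    refine ⟨N.mulVec y, ?_, ?_⟩
    · show g (N.mulVec y) ≤ ℏ
      rw [← hfg, Matrix.mulVec_mulVec, hMN, Matrix.one_mulVec]
      exact hy
    · rw [Matrix.mulVec_mulVec, hMN, Matrix.one_mulVec]

end Helpers

/-- If `X^ℏ ⊆ P` (for the ellipsoids `X`, `P` carried by `A`, `B`), then the
block-diagonal matrix `K = [[B^{1/2}A^{1/2}, 0],[0, B^{-1/2}A^{-1/2}]]` is symplectic,
`B^{1/2}A^{1/2}(X) = P^ℏ ⊆ X`, `B^{-1/2}A^{-1/2}(X^ℏ) = P`; in particular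
`K(X × X^ℏ) ⊆ X × P`, so the image under `K` of the quantum blob
`{(x,p) : Ax·x + A⁻¹p·p ≤ ℏ}` is a quantum blob contained in `X × P`. -/
theorem statement17 (n : ℕ) (ℏ : ℝ) (hℏ : 0 < ℏ)
    (A B : Matrix (Fin n) (Fin n) ℝ) (hA : A.PosDef) (hB : B.PosDef)
    (hXP : polarDual ℏ {x : Fin n → ℝ | A.mulVec x ⬝ᵥ x ≤ ℏ}
      ⊆ {p : Fin n → ℝ | B.mulVec p ⬝ᵥ p ≤ ℏ}) :
    ∀ Asq Bsq : Matrix (Fin n) (Fin n) ℝ,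
      Asq.PosDef → Asq * Asq = A → Bsq.PosDef → Bsq * Bsq = B →
      IsSymplectic (Matrix.fromBlocks (Bsq * Asq) 0 0 (Bsq⁻¹ * Asq⁻¹)) ∧
      (Bsq * Asq).mulVec '' {x : Fin n → ℝ | A.mulVec x ⬝ᵥ x ≤ ℏ}
        = polarDual ℏ {p : Fin n → ℝ | B.mulVec p ⬝ᵥ p ≤ ℏ} ∧
      polarDual ℏ {p : Fin n → ℝ | B.mulVec p ⬝ᵥ p ≤ ℏ}
        ⊆ {x : Fin n → ℝ | A.mulVec x ⬝ᵥ x ≤ ℏ} ∧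
      (Bsq⁻¹ * Asq⁻¹).mulVec ''
          polarDual ℏ {x : Fin n → ℝ | A.mulVec x ⬝ᵥ x ≤ ℏ}
        = {p : Fin n → ℝ | B.mulVec p ⬝ᵥ p ≤ ℏ} ∧
      (Matrix.fromBlocks (Bsq * Asq) 0 0 (Bsq⁻¹ * Asq⁻¹)).mulVec ''
          {z : (Fin n ⊕ Fin n) → ℝ |
            (z ∘ Sum.inl) ∈ {x : Fin n → ℝ | A.mulVec x ⬝ᵥ x ≤ ℏ}
              ∧ (z ∘ Sum.inr) ∈ polarDual ℏ {x : Fin n → ℝ | A.mulVec x ⬝ᵥ x ≤ ℏ}}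
        ⊆ {z : (Fin n ⊕ Fin n) → ℝ |
            A.mulVec (z ∘ Sum.inl) ⬝ᵥ (z ∘ Sum.inl) ≤ ℏ
              ∧ B.mulVec (z ∘ Sum.inr) ⬝ᵥ (z ∘ Sum.inr) ≤ ℏ} ∧
      (∃ S : Matrix (Fin n ⊕ Fin n) (Fin n ⊕ Fin n) ℝ, IsSymplectic S ∧
        (Matrix.fromBlocks (Bsq * Asq) 0 0 (Bsq⁻¹ * Asq⁻¹)).mulVec ''
            {z : (Fin n ⊕ Fin n) → ℝ |
              A.mulVec (z ∘ Sum.inl) ⬝ᵥ (z ∘ Sum.inl)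
                + A⁻¹.mulVec (z ∘ Sum.inr) ⬝ᵥ (z ∘ Sum.inr) ≤ ℏ}
          = S.mulVec '' ballPhase n (Real.sqrt ℏ)) ∧
      (Matrix.fromBlocks (Bsq * Asq) 0 0 (Bsq⁻¹ * Asq⁻¹)).mulVec ''
          {z : (Fin n ⊕ Fin n) → ℝ |
            A.mulVec (z ∘ Sum.inl) ⬝ᵥ (z ∘ Sum.inl)
              + A⁻¹.mulVec (z ∘ Sum.inr) ⬝ᵥ (z ∘ Sum.inr) ≤ ℏ}
        ⊆ {z : (Fin n ⊕ Fin n) → ℝ |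
            A.mulVec (z ∘ Sum.inl) ⬝ᵥ (z ∘ Sum.inl) ≤ ℏ
              ∧ B.mulVec (z ∘ Sum.inr) ⬝ᵥ (z ∘ Sum.inr) ≤ ℏ} := by
  intro Asq Bsq hAsq hA2 hBsq hB2
  have hsA := symm_of_posDef hAsq
  have hsB := symm_of_posDef hBsq
  have hsAi := symm_inv_of_posDef hAsq
  have hsBi := symm_inv_of_posDef hBsq
  have hAi := inv_cancel_of_posDef hAsq
  have hAi' := inv_cancel_of_posDef' hAsq
  have hBi := inv_cancel_of_posDef hBsq
  have hBi' := inv_cancel_of_posDef' hBsq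
  set L := Bsq * Asq with hL
  set M := Bsq⁻¹ * Asq⁻¹ with hM
  -- polar duals of the ellipsoids
  have hpolX := polar_ellipsoid hℏ hAsq hA2
  have hpolP := polar_ellipsoid hℏ hBsq hB2
  -- matrix identities
  have hLT : Lᵀ = Asq * Bsq := by rw [hL, Matrix.transpose_mul, hsA, hsB]
  have hMT : Mᵀ = Asq⁻¹ * Bsq⁻¹ := by rw [hM, Matrix.transpose_mul, hsAi, hsBi]
  have hLM : Lᵀ * M = 1 := by
    rw [hLT, hM, Matrix.mul_assoc Asq Bsq, ← Matrix.mul_assoc Bsq Bsq⁻¹, hBi,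
      Matrix.one_mul, hAi]
  have hSymp : IsSymplectic (Matrix.fromBlocks L 0 0 M) := blockSymp hLM
  -- the inverse of L
  have hLinv : L * (Asq⁻¹ * Bsq⁻¹) = 1 := by
    rw [hL, Matrix.mul_assoc Bsq Asq, ← Matrix.mul_assoc Asq Asq⁻¹, hAi,
      Matrix.one_mul, hBi]
  -- the inverse of M
  have hMinv : M * (Asq * Bsq) = 1 := by
    rw [hM, Matrix.mul_assoc Bsq⁻¹ Asq⁻¹, ← Matrix.mul_assoc Asq⁻¹ Asq, hAi',
      Matrix.one_mul, hBi']
  -- quadratic identity for L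
  have hBL : B⁻¹ * L = Bsq⁻¹ * Asq := by
    rw [inv_split hB2, hL, Matrix.mul_assoc Bsq⁻¹ Bsq⁻¹, ← Matrix.mul_assoc Bsq⁻¹ Bsq,
      hBi', Matrix.one_mul]
  have hfgL : ∀ x, B⁻¹.mulVec (L.mulVec x) ⬝ᵥ L.mulVec x = A.mulVec x ⬝ᵥ x := by
    intro x
    rw [Matrix.mulVec_mulVec, hBL, dot_shift, hLT]
    congr 1
    rw [Matrix.mul_assoc Asq Bsq, ← Matrix.mul_assoc Bsq Bsq⁻¹, hBi, Matrix.one_mul, hA2]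
  -- quadratic identity for M
  have hBM : B * M = Bsq * Asq⁻¹ := by
    rw [← hB2, hM, Matrix.mul_assoc Bsq Bsq, ← Matrix.mul_assoc Bsq Bsq⁻¹, hBi,
      Matrix.one_mul]
  have hfgM : ∀ p, B.mulVec (M.mulVec p) ⬝ᵥ M.mulVec p = A⁻¹.mulVec p ⬝ᵥ p := by
    intro p
    rw [Matrix.mulVec_mulVec, hBM, dot_shift, hMT]
    congr 1
    rw [Matrix.mul_assoc Asq⁻¹ Bsq⁻¹, ← Matrix.mul_assoc Bsq⁻¹ Bsq, hBi',
      Matrix.one_mul, ← inv_split hA2]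
  -- image identities
  have hImgL : L.mulVec '' {x : Fin n → ℝ | A.mulVec x ⬝ᵥ x ≤ ℏ}
      = polarDual ℏ {p : Fin n → ℝ | B.mulVec p ⬝ᵥ p ≤ ℏ} := by
    rw [hpolP]
    exact image_quad L (Asq⁻¹ * Bsq⁻¹) hLinv _ (fun y => B⁻¹.mulVec y ⬝ᵥ y) hfgL
  have hImgM : M.mulVec '' polarDual ℏ {x : Fin n → ℝ | A.mulVec x ⬝ᵥ x ≤ ℏ}
      = {p : Fin n → ℝ | B.mulVec p ⬝ᵥ p ≤ ℏ} := by
    rw [hpolX]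
    exact image_quad M (Asq * Bsq) hMinv _ (fun y => B.mulVec y ⬝ᵥ y) hfgM
  -- the quadratic-form inequality B ≤ A⁻¹
  have h1 : ∀ p, A⁻¹.mulVec p ⬝ᵥ p ≤ ℏ → B.mulVec p ⬝ᵥ p ≤ ℏ := by
    intro p hp
    exact hXP (hpolX ▸ hp : p ∈ polarDual ℏ {x : Fin n → ℝ | A.mulVec x ⬝ᵥ x ≤ ℏ})
  have hBA : ∀ p, B.mulVec p ⬝ᵥ p ≤ A⁻¹.mulVec p ⬝ᵥ p :=
    scale_le hℏ (quad_inv_nonneg hAsq hA2) (quad_inv_zero hAsq hA2) h1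
  -- transfer via operator norm flip: A ≤ B⁻¹
  have hAinvAsq : A⁻¹ * Asq = Asq⁻¹ := by
    rw [inv_split hA2, Matrix.mul_assoc, hAi', Matrix.mul_one]
  have hCu : ∀ u, L.mulVec u ⬝ᵥ L.mulVec u ≤ u ⬝ᵥ u := by
    intro u
    have h2 := hBA (Asq.mulVec u)
    have hlhs : B.mulVec (Asq.mulVec u) ⬝ᵥ Asq.mulVec u = L.mulVec u ⬝ᵥ L.mulVec u := by
      rw [Matrix.mulVec_mulVec, dot_shift, dot_shift, hsA, hLT]
      congr 2
      rw [hL, ← hB2, Matrix.mul_assoc Bsq Bsq Asq, ← Matrix.mul_assoc Asq Bsq (Bsq * Asq)]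
    have hrhs : A⁻¹.mulVec (Asq.mulVec u) ⬝ᵥ Asq.mulVec u = u ⬝ᵥ u := by
      rw [Matrix.mulVec_mulVec, hAinvAsq, dot_shift, hsA, hAi, Matrix.one_mulVec]
    rwa [hlhs, hrhs] at h2
  have hCtv := flip_le hCu
  have hAB : ∀ x, A.mulVec x ⬝ᵥ x ≤ B⁻¹.mulVec x ⬝ᵥ x := by
    intro x
    have h2 := hCtv (Bsq⁻¹.mulVec x)
    have hLTB : Lᵀ.mulVec (Bsq⁻¹.mulVec x) = Asq.mulVec x := by
      rw [Matrix.mulVec_mulVec, hLT, Matrix.mul_assoc, hBi, Matrix.mul_one]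
    rw [hLTB, ← quad_sq hAsq hA2, ← quad_inv_sq hBsq hB2] at h2
    exact h2
  -- polar dual of P is contained in X
  have hPX : polarDual ℏ {p : Fin n → ℝ | B.mulVec p ⬝ᵥ p ≤ ℏ}
      ⊆ {x : Fin n → ℝ | A.mulVec x ⬝ᵥ x ≤ ℏ} := by
    rw [hpolP]
    intro x hx
    exact le_trans (hAB x) hx
  -- the product inclusion
  have hProd : (Matrix.fromBlocks L 0 0 M).mulVec ''
      {z : (Fin n ⊕ Fin n) → ℝ |
        (z ∘ Sum.inl) ∈ {x : Fin n → ℝ | A.mulVec x ⬝ᵥ x ≤ ℏ}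
          ∧ (z ∘ Sum.inr) ∈ polarDual ℏ {x : Fin n → ℝ | A.mulVec x ⬝ᵥ x ≤ ℏ}}
      ⊆ {z : (Fin n ⊕ Fin n) → ℝ |
          A.mulVec (z ∘ Sum.inl) ⬝ᵥ (z ∘ Sum.inl) ≤ ℏ
            ∧ B.mulVec (z ∘ Sum.inr) ⬝ᵥ (z ∘ Sum.inr) ≤ ℏ} := by
    rintro z ⟨z', ⟨hz1, hz2⟩, rfl⟩
    rw [Set.mem_setOf_eq, mulVec_block_inl, mulVec_block_inr]
    constructor
    · have hmem := Set.mem_image_of_mem L.mulVec hz1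
      rw [hImgL] at hmem
      exact hPX hmem
    · have hmem := Set.mem_image_of_mem M.mulVec hz2
      rw [hImgM] at hmem
      exact hmem
  -- the quantum blob as image of a ball
  set T := Matrix.fromBlocks Asq⁻¹ 0 0 Asq with hT
  set T' := Matrix.fromBlocks Asq 0 0 Asq⁻¹ with hT'
  have hTT : T * T' = 1 := by
    rw [hT, hT', Matrix.fromBlocks_multiply]
    simp only [Matrix.mul_zero, Matrix.zero_mul, add_zero, zero_add, hAi, hAi']
    exact Matrix.fromBlocks_one
  have hTval : ∀ w : (Fin n ⊕ Fin n) → ℝ,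
      A.mulVec ((T.mulVec w) ∘ Sum.inl) ⬝ᵥ ((T.mulVec w) ∘ Sum.inl)
        + A⁻¹.mulVec ((T.mulVec w) ∘ Sum.inr) ⬝ᵥ ((T.mulVec w) ∘ Sum.inr)
        = ∑ i, w i ^ 2 := by
    intro w
    rw [hT, mulVec_block_inl, mulVec_block_inr, quad_sq hAsq hA2, quad_inv_sq hAsq hA2]
    simp only [Matrix.mulVec_mulVec, hAi, hAi', Matrix.one_mulVec]
    rw [Fintype.sum_sum_type]
    simp [dotProduct, sq, Function.comp]
  have hball : ballPhase n (Real.sqrt ℏ) = {w : (Fin n ⊕ Fin n) → ℝ | ∑ i, w i ^ 2 ≤ ℏ} := by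
    unfold ballPhase
    rw [Real.sq_sqrt hℏ.le]
  have hblob : {z : (Fin n ⊕ Fin n) → ℝ |
      A.mulVec (z ∘ Sum.inl) ⬝ᵥ (z ∘ Sum.inl)
        + A⁻¹.mulVec (z ∘ Sum.inr) ⬝ᵥ (z ∘ Sum.inr) ≤ ℏ}
      = T.mulVec '' ballPhase n (Real.sqrt ℏ) := by
    rw [hball]
    ext z
    constructor
    · intro hz
      have hzw : T.mulVec (T'.mulVec z) = z := by
        rw [Matrix.mulVec_mulVec, hTT, Matrix.one_mulVec]
      refine ⟨T'.mulVec z, ?_, hzw⟩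
      show ∑ i, (T'.mulVec z) i ^ 2 ≤ ℏ
      have hv := hTval (T'.mulVec z)
      rw [hzw] at hv
      rw [← hv]
      exact hz
    · rintro ⟨w, hw, rfl⟩
      show _ + _ ≤ ℏ
      rw [hTval w]
      exact hw
  have hLA : L * Asq⁻¹ = Bsq := by rw [hL, Matrix.mul_assoc, hAi, Matrix.mul_one]
  have hMA : M * Asq = Bsq⁻¹ := by rw [hM, Matrix.mul_assoc, hAi', Matrix.mul_one]
  have hKT : Matrix.fromBlocks L 0 0 M * T = Matrix.fromBlocks Bsq 0 0 Bsq⁻¹ := by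
    rw [hT, Matrix.fromBlocks_multiply]
    simp only [Matrix.mul_zero, Matrix.zero_mul, add_zero, zero_add, hLA, hMA]
  have hSsymp : IsSymplectic (Matrix.fromBlocks Bsq 0 0 Bsq⁻¹) :=
    blockSymp (by rw [hsB, hBi])
  have hEx : (Matrix.fromBlocks L 0 0 M).mulVec ''
      {z : (Fin n ⊕ Fin n) → ℝ |
        A.mulVec (z ∘ Sum.inl) ⬝ᵥ (z ∘ Sum.inl)
          + A⁻¹.mulVec (z ∘ Sum.inr) ⬝ᵥ (z ∘ Sum.inr) ≤ ℏ}
      = (Matrix.fromBlocks Bsq 0 0 Bsq⁻¹).mulVec '' ballPhase n (Real.sqrt ℏ) := by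
    rw [hblob, ← Set.image_comp]
    have hcomp : (Matrix.fromBlocks L 0 0 M).mulVec ∘ T.mulVec
        = (Matrix.fromBlocks Bsq 0 0 Bsq⁻¹).mulVec := by
      funext w
      show (Matrix.fromBlocks L 0 0 M).mulVec (T.mulVec w) = _
      rw [Matrix.mulVec_mulVec, hKT]
    rw [hcomp]
  refine ⟨hSymp, hImgL, hPX, hImgM, hProd,
    ⟨Matrix.fromBlocks Bsq 0 0 Bsq⁻¹, hSsymp, hEx⟩, ?_⟩
  rintro z ⟨z', hz', rfl⟩
  apply hProd
  refine ⟨z', ⟨?_, ?_⟩, rfl⟩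
  · exact le_trans (le_add_of_nonneg_right (quad_inv_nonneg hAsq hA2 _)) hz'
  · rw [hpolX]
    exact le_trans (le_add_of_nonneg_left (quad_nonneg hAsq hA2 _)) hz'
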